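/- For every n ≥ 2 and every k with 1 ≤ k ≤ n−1, there exists a randomized strategyproof k-selection mechanism on N = {1,…,n} with approximation ratio at most 4: for every directed graph G on N, max_{S ⊆ N, |S| = k} Σ_{j∈S} deg(j,G) ≤ 4 · E_{S ∼ f(G)}[Σ_{j∈S} deg(j,G)]. -/

import Mathlib

open Finset

namespace Stmt3

variable {n : ℕ}

/-- indegree of `j` counting only votes from outside `A`. -/
def wt (G : Fin n → Finset (Fin n)) (A : Finset (Fin n)) (j : Fin n) : ℕ :=
  ((univ \ A).filter fun a => j ∈ G a).card

lemma top_aux (k : ℕ) (A : Finset (Fin n)) (w : Fin n → ℕ) :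
    ∃ T ∈ A.powersetCard (min k A.card),
      ∀ T' ∈ A.powersetCard (min k A.card), ∑ j ∈ T', w j ≤ ∑ j ∈ T, w j :=
  Finset.exists_max_image _ _ (Finset.powersetCard_nonempty.mpr (min_le_right _ _))

noncomputable def top (k : ℕ) (A : Finset (Fin n)) (w : Fin n → ℕ) : Finset (Fin n) :=
  (top_aux k A w).choose

lemma top_mem (k : ℕ) (A : Finset (Fin n)) (w : Fin n → ℕ) :
    top k A w ∈ A.powersetCard (min k A.card) :=
  (top_aux k A w).choose_spec.1

lemma top_max (k : ℕ) (A : Finset (Fin n)) (w : Fin n → ℕ) :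
    ∀ T' ∈ A.powersetCard (min k A.card), ∑ j ∈ T', w j ≤ ∑ j ∈ top k A w, w j :=
  (top_aux k A w).choose_spec.2

lemma top_subset (k : ℕ) (A : Finset (Fin n)) (w : Fin n → ℕ) : top k A w ⊆ A :=
  (mem_powersetCard.mp (top_mem k A w)).1

lemma top_card (k : ℕ) (A : Finset (Fin n)) (w : Fin n → ℕ) :
    (top k A w).card = min k A.card :=
  (mem_powersetCard.mp (top_mem k A w)).2

lemma top_card_le (k : ℕ) (A : Finset (Fin n)) (w : Fin n → ℕ) :
    (top k A w).card ≤ k := by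
  rw [top_card]; exact min_le_left _ _

/-- padding sets -/
def pads (k : ℕ) (T : Finset (Fin n)) : Finset (Finset (Fin n)) :=
  (univ \ T).powersetCard (k - T.card)

lemma card_pads (k : ℕ) (T : Finset (Fin n)) :
    (pads k T).card = (n - T.card).choose (k - T.card) := by
  rw [pads, card_powersetCard, card_sdiff_of_subset (subset_univ _), card_univ, Fintype.card_fin]

lemma card_pads_pos (k : ℕ) (hk : k ≤ n) {T : Finset (Fin n)} (hT : T.card ≤ k) :
    0 < (pads k T).card := by
  rw [card_pads]
  exact Nat.choose_pos (Nat.sub_le_sub_right hk _)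

/-- the mechanism -/
noncomputable def mech (k : ℕ) (G : Fin n → Finset (Fin n)) (S : Finset (Fin n)) : ℝ :=
  ∑ A : Finset (Fin n), (2⁻¹ : ℝ) ^ n * ((pads k (top k A (wt G A))).card : ℝ)⁻¹ *
    ∑ P ∈ pads k (top k A (wt G A)), if S = top k A (wt G A) ∪ P then 1 else 0

lemma mech_nonneg (k : ℕ) (G : Fin n → Finset (Fin n)) (S : Finset (Fin n)) :
    0 ≤ mech k G S := by
  refine Finset.sum_nonneg fun A _ => mul_nonneg (by positivity) (Finset.sum_nonneg ?_)
  intro P _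
  split <;> norm_num

lemma mech_sum (k : ℕ) (hk : k ≤ n) (G : Fin n → Finset (Fin n)) :
    ∑ S : Finset (Fin n), mech k G S = 1 := by
  unfold mech
  rw [Finset.sum_comm]
  have h1 : ∀ A : Finset (Fin n),
      (∑ S : Finset (Fin n), (2⁻¹ : ℝ) ^ n * ((pads k (top k A (wt G A))).card : ℝ)⁻¹ *
        ∑ P ∈ pads k (top k A (wt G A)), if S = top k A (wt G A) ∪ P then 1 else 0)
      = (2⁻¹ : ℝ) ^ n := by
    intro A
    set T := top k A (wt G A) with hT
    rw [← Finset.mul_sum, Finset.sum_comm]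
    have h2 : ∀ P ∈ pads k T, (∑ S : Finset (Fin n), if S = T ∪ P then (1:ℝ) else 0) = 1 := by
      intro P _
      rw [Finset.sum_ite_eq' univ (T ∪ P) (fun _ => (1:ℝ))]
      simp
    rw [Finset.sum_congr rfl h2, Finset.sum_const, nsmul_eq_mul, mul_one]
    have hN : ((pads k T).card : ℝ) ≠ 0 := by
      exact_mod_cast (card_pads_pos k hk (top_card_le k A (wt G A))).ne'
    field_simp
  rw [Finset.sum_congr rfl fun A _ => h1 A, Finset.sum_const, nsmul_eq_mul, card_univ,
    Fintype.card_finset, Fintype.card_fin]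
  push_cast
  rw [← mul_pow]
  norm_num

lemma mech_support (k : ℕ) (G : Fin n → Finset (Fin n)) (S : Finset (Fin n))
    (h : mech k G S ≠ 0) : S.card = k := by
  obtain ⟨A, -, hA⟩ := Finset.exists_ne_zero_of_sum_ne_zero h
  set T := top k A (wt G A) with hT
  have h2 : (∑ P ∈ pads k T, if S = T ∪ P then (1:ℝ) else 0) ≠ 0 := by
    intro h0
    rw [h0, mul_zero] at hA
    exact hA rfl
  obtain ⟨P, hP, hP0⟩ := Finset.exists_ne_zero_of_sum_ne_zero h2
  have hS : S = T ∪ P := by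
    by_contra hc
    rw [if_neg hc] at hP0
    exact hP0 rfl
  obtain ⟨hPsub, hPcard⟩ := mem_powersetCard.mp hP
  have hdisj : Disjoint T P := by
    rw [disjoint_comm]
    exact disjoint_of_subset_left hPsub (sdiff_disjoint)
  rw [hS, card_union_of_disjoint hdisj, hPcard]
  have h3 : T.card ≤ k := top_card_le k A (wt G A)
  omega

lemma count0 {α : Type*} [DecidableEq α] (s : Finset α) (i : α) :
    ((s.powersetCard 0).filter fun P => i ∈ P).card = 0 := by
  simp [Finset.powersetCard_zero, Finset.filter_singleton]

lemma countSucc {α : Type*} [DecidableEq α] {s : Finset α} {i : α} (hi : i ∈ s) (m : ℕ) :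
    ((s.powersetCard (m + 1)).filter fun P => i ∈ P).card = (s.card - 1).choose m := by
  rw [← card_erase_of_mem hi, ← card_powersetCard]
  apply card_nbij' (fun P => P.erase i) (fun Q => insert i Q)
  · intro P hP
    obtain ⟨hP1, hP2⟩ := mem_filter.mp hP
    obtain ⟨hPsub, hPcard⟩ := mem_powersetCard.mp hP1
    rw [mem_coe, mem_powersetCard]
    exact ⟨erase_subset_erase _ hPsub, by simp [card_erase_of_mem hP2, hPcard]⟩
  · intro Q hQ
    obtain ⟨hQsub, hQcard⟩ := mem_powersetCard.mp hQ
    have hiQ : i ∉ Q := fun h => (mem_erase.mp (hQsub h)).1 rfl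
    rw [mem_coe, mem_filter, mem_powersetCard]
    refine ⟨⟨insert_subset hi (hQsub.trans (erase_subset _ _)), ?_⟩, mem_insert_self _ _⟩
    rw [card_insert_of_notMem hiQ, hQcard]
  · intro P hP
    exact insert_erase (mem_filter.mp hP).2
  · intro Q hQ
    obtain ⟨hQsub, -⟩ := mem_powersetCard.mp hQ
    exact erase_insert (fun h => (mem_erase.mp (hQsub h)).1 rfl)

lemma sp_sum (k : ℕ) (i : Fin n) (G : Fin n → Finset (Fin n)) :
    ∑ S ∈ univ.filter (fun S : Finset (Fin n) => i ∈ S), mech k G S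
      = ∑ A : Finset (Fin n), (2⁻¹ : ℝ) ^ n * ((pads k (top k A (wt G A))).card : ℝ)⁻¹ *
          ∑ P ∈ pads k (top k A (wt G A)), if i ∈ top k A (wt G A) ∪ P then 1 else 0 := by
  unfold mech
  rw [Finset.sum_comm]
  refine Finset.sum_congr rfl fun A _ => ?_
  set T := top k A (wt G A) with hT
  rw [← Finset.mul_sum]
  congr 1
  rw [Finset.sum_comm]
  refine Finset.sum_congr rfl fun P _ => ?_
  rw [Finset.sum_ite_eq' (univ.filter fun S : Finset (Fin n) => i ∈ S) (T ∪ P) (fun _ => (1:ℝ))]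
  simp [mem_filter]

lemma mech_sp (k : ℕ) (i : Fin n) (G G' : Fin n → Finset (Fin n))
    (hGG' : ∀ a, a ≠ i → G a = G' a) :
    ∑ S ∈ univ.filter (fun S : Finset (Fin n) => i ∈ S), mech k G S
      = ∑ S ∈ univ.filter (fun S : Finset (Fin n) => i ∈ S), mech k G' S := by
  rw [sp_sum, sp_sum]
  refine Finset.sum_congr rfl fun A _ => ?_
  by_cases hiA : i ∈ A
  · have hw : wt G A = wt G' A := by
      funext j
      unfold wt
      apply congrArg
      apply filter_congr
      intro a ha
      have hai : a ≠ i := fun h => (mem_sdiff.mp ha).2 (h ▸ hiA)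
      rw [hGG' a hai]
    rw [hw]
  · set T := top k A (wt G A) with hTdef
    set T' := top k A (wt G' A) with hT'def
    have hiT : i ∉ T := fun h => hiA (top_subset k A (wt G A) h)
    have hiT' : i ∉ T' := fun h => hiA (top_subset k A (wt G' A) h)
    have hcard : T.card = T'.card := by rw [hTdef, hT'def, top_card, top_card]
    have e : ∀ T₀ : Finset (Fin n), i ∉ T₀ →
        (∑ P ∈ pads k T₀, if i ∈ T₀ ∪ P then (1:ℝ) else 0)
          = (((pads k T₀).filter fun P => i ∈ P).card : ℝ) := by
      intro T₀ h0
      rw [← Finset.sum_boole]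
      refine Finset.sum_congr rfl fun P _ => ?_
      simp [mem_union, h0]
    have hc : ((pads k T).filter fun P => i ∈ P).card
        = ((pads k T').filter fun P => i ∈ P).card := by
      unfold pads
      rw [hcard]
      cases hm : (k - T'.card) with
      | zero => rw [count0, count0]
      | succ m' =>
        rw [countSucc (mem_sdiff.mpr ⟨mem_univ _, hiT⟩),
          countSucc (mem_sdiff.mpr ⟨mem_univ _, hiT'⟩),
          card_sdiff_of_subset (subset_univ _), card_sdiff_of_subset (subset_univ _), hcard]
    have hN : ((pads k T).card : ℝ) = ((pads k T').card : ℝ) := by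
      rw [card_pads, card_pads, hcard]
    rw [e T hiT, e T' hiT', hc, hN]

lemma card_bipart (hn : 2 ≤ n) {i j : Fin n} (hij : i ≠ j) :
    ((univ : Finset (Finset (Fin n))).filter fun A => j ∈ A ∧ i ∉ A).card = 2 ^ (n - 2) := by
  have h : ((((univ : Finset (Fin n)).erase i).erase j).powerset).card = 2 ^ (n - 2) := by
    rw [card_powerset, card_erase_of_mem (mem_erase.mpr ⟨hij.symm, mem_univ _⟩),
      card_erase_of_mem (mem_univ _), card_univ, Fintype.card_fin]
    congr 1
  rw [← h]
  apply card_nbij' (fun A => A.erase j) (fun Q => insert j Q)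
  · intro A hA
    obtain ⟨-, hjA, hiA⟩ := mem_filter.mp hA
    rw [mem_coe, mem_powerset]
    intro x hx
    obtain ⟨hxj, hxA⟩ := mem_erase.mp hx
    exact mem_erase.mpr ⟨hxj, mem_erase.mpr ⟨fun h => hiA (h ▸ hxA), mem_univ _⟩⟩
  · intro Q hQ
    have hQsub := mem_powerset.mp hQ
    have hiQ : i ∉ Q := fun h => (mem_erase.mp (mem_erase.mp (hQsub h)).2).1 rfl
    refine mem_filter.mpr ⟨mem_univ _, mem_insert_self _ _, ?_⟩
    rw [mem_insert]
    rintro (h | h)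
    · exact hij h
    · exact hiQ h
  · intro A hA
    exact insert_erase (mem_filter.mp hA).2.1
  · intro Q hQ
    have hQsub := mem_powerset.mp hQ
    exact erase_insert (fun h => (mem_erase.mp (hQsub h)).1 rfl)

lemma prob_quarter (hn : 2 ≤ n) {i j : Fin n} (hij : i ≠ j) :
    ∑ A : Finset (Fin n), (if j ∈ A ∧ i ∉ A then (2⁻¹ : ℝ) ^ n else 0) = 4⁻¹ := by
  rw [← Finset.sum_filter, Finset.sum_const, card_bipart hn hij, nsmul_eq_mul]
  push_cast
  have h3 : (2 : ℝ) ^ n = (2 : ℝ) ^ (n - 2) * 4 := by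
    calc (2:ℝ)^n = 2 ^ ((n-2) + 2) := by rw [Nat.sub_add_cancel hn]
    _ = 2 ^ (n-2) * 4 := by rw [pow_add]; norm_num
  rw [inv_pow, h3, mul_inv, ← mul_assoc,
    mul_inv_cancel₀ (by positivity : (2:ℝ)^(n-2) ≠ 0), one_mul]

lemma stepC (k : ℕ) (hn : 2 ≤ n) (G : Fin n → Finset (Fin n)) (hG : ∀ a, a ∉ G a)
    (K : Finset (Fin n)) :
    ∑ A : Finset (Fin n), (2⁻¹ : ℝ) ^ n * (∑ j ∈ K ∩ A, (wt G A j : ℝ))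
      = 4⁻¹ * ∑ j ∈ K, ((univ.filter fun a => j ∈ G a).card : ℝ) := by
  have hwt : ∀ (A : Finset (Fin n)) j, (wt G A j : ℝ)
      = ∑ a ∈ univ.filter (fun a => j ∈ G a), (if a ∈ A then (0:ℝ) else 1) := by
    intro A j
    unfold wt
    have he : (univ \ A).filter (fun a => j ∈ G a)
        = (univ.filter fun a => j ∈ G a).filter (fun a => a ∉ A) := by
      ext a
      simp only [mem_filter, mem_sdiff, mem_univ, true_and]
      tauto
    rw [he, card_filter]
    push_cast
    refine Finset.sum_congr rfl fun a _ => ?_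
    by_cases h : a ∈ A <;> simp [h]
  have h1 : ∀ A : Finset (Fin n), (2⁻¹ : ℝ) ^ n * (∑ j ∈ K ∩ A, (wt G A j : ℝ))
      = ∑ j ∈ K, ∑ a ∈ univ.filter (fun a => j ∈ G a),
          (if j ∈ A ∧ a ∉ A then (2⁻¹ : ℝ) ^ n else 0) := by
    intro A
    rw [← filter_mem_eq_inter, Finset.sum_filter, Finset.mul_sum]
    refine Finset.sum_congr rfl fun j _ => ?_
    by_cases hj : j ∈ A
    · rw [if_pos hj, hwt A j, Finset.mul_sum]
      refine Finset.sum_congr rfl fun a _ => ?_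
      by_cases ha : a ∈ A <;> simp [ha, hj]
    · rw [if_neg hj]
      rw [Finset.sum_eq_zero, mul_zero]
      intro a _
      simp [hj]
  rw [Finset.sum_congr rfl fun A _ => h1 A]
  rw [Finset.sum_comm]
  rw [Finset.mul_sum]
  refine Finset.sum_congr rfl fun j hj => ?_
  rw [Finset.sum_comm]
  have h2 : ∀ a ∈ univ.filter (fun a => j ∈ G a),
      (∑ A : Finset (Fin n), if j ∈ A ∧ a ∉ A then (2⁻¹ : ℝ) ^ n else 0) = 4⁻¹ := by
    intro a ha
    have haj : a ≠ j := by
      intro h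
      have := (mem_filter.mp ha).2
      rw [h] at this
      exact hG j this
    exact prob_quarter hn haj
  rw [Finset.sum_congr rfl h2, Finset.sum_const, nsmul_eq_mul]
  ring

lemma mech_approx (k : ℕ) (hn : 2 ≤ n) (hk : k ≤ n) (G : Fin n → Finset (Fin n))
    (hG : ∀ a, a ∉ G a) (K : Finset (Fin n)) (hK : K.card = k) :
    (∑ j ∈ K, ((univ.filter fun a => j ∈ G a).card : ℝ))
      ≤ 4 * ∑ S : Finset (Fin n),
          mech k G S * ∑ j ∈ S, ((univ.filter fun a => j ∈ G a).card : ℝ) := by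
  have hE : ∑ S : Finset (Fin n), mech k G S * ∑ j ∈ S, ((univ.filter fun a => j ∈ G a).card : ℝ)
      = ∑ A : Finset (Fin n), (2⁻¹ : ℝ) ^ n * ((pads k (top k A (wt G A))).card : ℝ)⁻¹ *
          ∑ P ∈ pads k (top k A (wt G A)),
            ∑ j ∈ top k A (wt G A) ∪ P, ((univ.filter fun a => j ∈ G a).card : ℝ) := by
    unfold mech
    simp_rw [Finset.sum_mul]
    rw [Finset.sum_comm]
    refine Finset.sum_congr rfl fun A _ => ?_
    set T := top k A (wt G A) with hT
    have hstep : ∀ S : Finset (Fin n),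
        ((2⁻¹:ℝ)^n * ((pads k T).card : ℝ)⁻¹ * ∑ P ∈ pads k T, if S = T ∪ P then (1:ℝ) else 0)
            * ∑ j ∈ S, ((univ.filter fun a => j ∈ G a).card : ℝ)
        = (2⁻¹:ℝ)^n * ((pads k T).card : ℝ)⁻¹ *
            ∑ P ∈ pads k T, (if S = T ∪ P then (1:ℝ) else 0)
              * ∑ j ∈ S, ((univ.filter fun a => j ∈ G a).card : ℝ) := by
      intro S
      rw [mul_assoc, Finset.sum_mul]
    rw [Finset.sum_congr rfl fun S _ => hstep S, ← Finset.mul_sum, Finset.sum_comm]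
    congr 1
    refine Finset.sum_congr rfl fun P _ => ?_
    simp_rw [ite_mul, one_mul, zero_mul]
    rw [Finset.sum_ite_eq' univ (T ∪ P)
      (fun S => ∑ j ∈ S, ((univ.filter fun a => j ∈ G a).card : ℝ))]
    simp
  have hB : ∀ A ∈ (univ : Finset (Finset (Fin n))),
      (2⁻¹:ℝ)^n * (∑ j ∈ K ∩ A, (wt G A j : ℝ))
        ≤ (2⁻¹:ℝ)^n * ((pads k (top k A (wt G A))).card : ℝ)⁻¹ *
            ∑ P ∈ pads k (top k A (wt G A)),
              ∑ j ∈ top k A (wt G A) ∪ P, ((univ.filter fun a => j ∈ G a).card : ℝ) := by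
    intro A _
    set T := top k A (wt G A) with hT
    have hNpos : (0:ℝ) < ((pads k T).card : ℝ) := by
      exact_mod_cast card_pads_pos k hk (top_card_le k A (wt G A))
    have hq : ∀ P ∈ pads k T, (∑ j ∈ K ∩ A, (wt G A j : ℝ))
        ≤ ∑ j ∈ T ∪ P, ((univ.filter fun a => j ∈ G a).card : ℝ) := by
      intro P hP
      have hc1 : (K ∩ A).card ≤ min k A.card :=
        le_min (le_trans (card_le_card inter_subset_left) hK.le) (card_le_card inter_subset_right)
      obtain ⟨U, hKU, hUA, hUcard⟩ :=
        exists_subsuperset_card_eq (inter_subset_right : K ∩ A ⊆ A) hc1 (min_le_right _ _)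
      have s1 : (∑ j ∈ K ∩ A, (wt G A j:ℝ)) ≤ ∑ j ∈ U, (wt G A j:ℝ) :=
        Finset.sum_le_sum_of_subset_of_nonneg hKU (fun j _ _ => by positivity)
      have s2 : (∑ j ∈ U, (wt G A j:ℝ)) ≤ ∑ j ∈ T, (wt G A j:ℝ) := by
        exact_mod_cast top_max k A (wt G A) U (mem_powersetCard.mpr ⟨hUA, hUcard⟩)
      have s3 : (∑ j ∈ T, (wt G A j:ℝ)) ≤ ∑ j ∈ T, ((univ.filter fun a => j ∈ G a).card : ℝ) := by
        refine Finset.sum_le_sum fun j _ => ?_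
        have h4 : wt G A j ≤ (univ.filter fun a => j ∈ G a).card :=
          card_le_card (filter_subset_filter _ (sdiff_subset))
        exact_mod_cast h4
      have s4 : (∑ j ∈ T, ((univ.filter fun a => j ∈ G a).card : ℝ))
          ≤ ∑ j ∈ T ∪ P, ((univ.filter fun a => j ∈ G a).card : ℝ) :=
        Finset.sum_le_sum_of_subset_of_nonneg subset_union_left (fun j _ _ => by positivity)
      linarith
    have h2 : ((pads k T).card : ℝ) * (∑ j ∈ K ∩ A, (wt G A j:ℝ))
        ≤ ∑ P ∈ pads k T, ∑ j ∈ T ∪ P, ((univ.filter fun a => j ∈ G a).card : ℝ) := by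
      calc ((pads k T).card : ℝ) * (∑ j ∈ K ∩ A, (wt G A j:ℝ))
          = ∑ _P ∈ pads k T, (∑ j ∈ K ∩ A, (wt G A j:ℝ)) := by
            rw [Finset.sum_const, nsmul_eq_mul]
        _ ≤ _ := Finset.sum_le_sum hq
    rw [mul_assoc]
    have h5 := mul_le_mul_of_nonneg_left h2
      (le_of_lt (by positivity : (0:ℝ) < ((pads k T).card:ℝ)⁻¹))
    rw [← mul_assoc, inv_mul_cancel₀ hNpos.ne', one_mul] at h5
    exact mul_le_mul_of_nonneg_left h5 (by positivity)
  have hsum := Finset.sum_le_sum hB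
  rw [stepC k hn G hG K] at hsum
  rw [hE]
  linarith

end Stmt3

/-- for every `n ≥ 2` and `1 ≤ k ≤ n-1` there is a randomized
strategyproof `k`-selection mechanism with approximation ratio at most 4.
A randomized mechanism is modelled by the probabilities `f G S` of selecting
a set `S`; it must be a probability distribution supported on `k`-subsets,
the winning probability of each agent must be independent of its own reported
outgoing edges, and for every valid graph the optimal total indegree of a
`k`-subset is at most 4 times the expected total indegree of the selection. -/
theorem stmt_3 (n k : ℕ) (hn : 2 ≤ n) (hk1 : 1 ≤ k) (hk2 : k ≤ n - 1) :
    ∃ f : (Fin n → Finset (Fin n)) → Finset (Fin n) → ℝ,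
      (∀ G S, 0 ≤ f G S) ∧
      (∀ G : Fin n → Finset (Fin n), (∀ i, i ∉ G i) →
        ∑ S : Finset (Fin n), f G S = 1) ∧
      (∀ (G : Fin n → Finset (Fin n)) (S : Finset (Fin n)), (∀ i, i ∉ G i) →
        f G S ≠ 0 → S.card = k) ∧
      (∀ (i : Fin n) (G G' : Fin n → Finset (Fin n)),
        (∀ a, a ∉ G a) → (∀ a, a ∉ G' a) → (∀ a, a ≠ i → G a = G' a) →
        ∑ S ∈ Finset.univ.filter (fun S : Finset (Fin n) => i ∈ S), f G S =
          ∑ S ∈ Finset.univ.filter (fun S : Finset (Fin n) => i ∈ S), f G' S) ∧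
      (∀ G : Fin n → Finset (Fin n), (∀ i, i ∉ G i) →
        ∀ K : Finset (Fin n), K.card = k →
          (∑ j ∈ K, ((Finset.univ.filter (fun i => j ∈ G i)).card : ℝ)) ≤
            4 * ∑ S : Finset (Fin n),
              f G S * ∑ j ∈ S, ((Finset.univ.filter (fun i => j ∈ G i)).card : ℝ)) :=
  ⟨Stmt3.mech k,
    fun G S => Stmt3.mech_nonneg k G S,
    fun G _ => Stmt3.mech_sum k (by omega) G,
    fun G S _ h => Stmt3.mech_support k G S h,
    fun i G G' _ _ h => Stmt3.mech_sp k i G G' h,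
    fun G hG K hK => Stmt3.mech_approx k hn (by omega) G hG K hK⟩
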